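/- Let k be even and G = G_0(u) ⋄ H(u) be a connected k-uniform hypergraph. If x is a first eigenvector of G, then α_H(x) := Σ_{e ∈ E_H(u)} Π_{v ∈ e} x_v ≤ 0. Moreover, if x_u ≠ 0 and x|_{G_0} ≠ 0, then α_H(x) < 0. -/

import Mathlib

open Finset BigOperators

variable {V : Type*}

/-- A `k`-uniform hypergraph given by its edge set: every edge has exactly `k` vertices. -/
def Uniform [DecidableEq V] (E : Finset (Finset V)) (k : ℕ) : Prop :=
  ∀ e ∈ E, e.card = k

/-- Two vertices are adjacent if some edge contains both. -/
def HAdj [DecidableEq V] (E : Finset (Finset V)) (a b : V) : Prop :=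
  a ≠ b ∧ ∃ e ∈ E, a ∈ e ∧ b ∈ e

/-- The hypergraph is connected: every two vertices are joined by a walk. -/
def HConnected [DecidableEq V] (E : Finset (Finset V)) : Prop :=
  ∀ a b : V, Relation.ReflTransGen (HAdj E) a b

/-- `(lam, x)` satisfies the H-eigen equations of the adjacency tensor:
for each vertex `v`, `∑_{e ∋ v} ∏_{w ∈ e \ {v}} x w = lam * (x v)^(k-1)`. -/
def isEig [Fintype V] [DecidableEq V] (E : Finset (Finset V)) (k : ℕ) (lam : ℝ) (x : V → ℝ) :
    Prop :=
  ∀ v : V, (∑ e ∈ E.filter (fun e => v ∈ e), ∏ w ∈ e.erase v, x w) = lam * x v ^ (k - 1)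

/-- The set of H-eigenvalues of the adjacency tensor of the hypergraph. -/
def specH [Fintype V] [DecidableEq V] (E : Finset (Finset V)) (k : ℕ) : Set ℝ :=
  {lam | ∃ x : V → ℝ, x ≠ 0 ∧ isEig E k lam x}

/-- The least H-eigenvalue of the adjacency tensor. -/
noncomputable def lamMin [Fintype V] [DecidableEq V] (E : Finset (Finset V)) (k : ℕ) : ℝ :=
  sInf (specH E k)

/-- A first eigenvector: a real eigenvector associated with the least H-eigenvalue. -/
def IsFirstEigvec [Fintype V] [DecidableEq V] (E : Finset (Finset V)) (k : ℕ) (x : V → ℝ) :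
    Prop :=
  x ≠ 0 ∧ isEig E k (lamMin E k) x


set_option linter.unusedSectionVars false

noncomputable def Phi [DecidableEq V] (E : Finset (Finset V)) (z : V → ℝ) : ℝ :=
  ∑ e ∈ E, ∏ v ∈ e, z v

noncomputable def Nk [Fintype V] (k : ℕ) (z : V → ℝ) : ℝ := ∑ v, z v ^ k

section
variable [Fintype V] [DecidableEq V]

lemma hasStrict_Nk (k : ℕ) (z : V → ℝ) :
    HasStrictFDerivAt (Nk (V := V) k)
      (∑ v : V, ((k : ℝ) * z v ^ (k - 1)) • ContinuousLinearMap.proj (R := ℝ) (φ := fun _ : V => ℝ) v) z := by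
  apply HasStrictFDerivAt.fun_sum
  intro v _
  exact (hasStrictDerivAt_pow k (z v)).comp_hasStrictFDerivAt z
    (hasStrictFDerivAt_apply (𝕜 := ℝ) v z)

lemma hasStrict_Phi (E : Finset (Finset V)) (z : V → ℝ) :
    HasStrictFDerivAt (Phi E)
      (∑ e ∈ E, ∑ v ∈ e, (∏ w ∈ e.erase v, z w) • ContinuousLinearMap.proj (R := ℝ) (φ := fun _ : V => ℝ) v) z := by
  apply HasStrictFDerivAt.fun_sum
  intro e _
  exact HasStrictFDerivAt.finset_prod (fun v _ => (hasStrictFDerivAt_apply (𝕜 := ℝ) v z))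

set_option linter.unusedSectionVars false

lemma eval_deriv_Nk (k : ℕ) (z : V → ℝ) (v : V) :
    (∑ w : V, ((k : ℝ) * z w ^ (k - 1)) • ContinuousLinearMap.proj (R := ℝ) (φ := fun _ : V => ℝ) w)
      (Pi.single v 1) = (k : ℝ) * z v ^ (k - 1) := by
  rw [ContinuousLinearMap.sum_apply]
  rw [Finset.sum_eq_single v]
  · simp
  · intro w _ hw
    simp [Pi.single_eq_of_ne hw]
  · simp

lemma eval_deriv_Phi (E : Finset (Finset V)) (z : V → ℝ) (v : V) :
    (∑ e ∈ E, ∑ w ∈ e, (∏ y ∈ e.erase w, z y) • ContinuousLinearMap.proj (R := ℝ) (φ := fun _ : V => ℝ) w)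
      (Pi.single v 1) = ∑ e ∈ E.filter (fun e => v ∈ e), ∏ w ∈ e.erase v, z w := by
  rw [ContinuousLinearMap.sum_apply, Finset.sum_filter]
  refine Finset.sum_congr rfl fun e _ => ?_
  rw [ContinuousLinearMap.sum_apply]
  by_cases hv : v ∈ e
  · rw [if_pos hv, Finset.sum_eq_single v]
    · simp
    · intro w _ hw
      simp [Pi.single_eq_of_ne hw]
    · intro h; exact absurd hv h
  · rw [if_neg hv]
    apply Finset.sum_eq_zero
    intro w hw
    have : w ≠ v := fun h => hv (h ▸ hw)
    simp [Pi.single_eq_of_ne this]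

lemma sum_key (F : Finset (Finset V)) (T : Finset V) (z : V → ℝ) :
    ∑ v ∈ T, z v * ∑ e ∈ F.filter (fun e => v ∈ e), ∏ w ∈ e.erase v, z w
      = ∑ e ∈ F, ((e ∩ T).card : ℝ) * ∏ v ∈ e, z v := by
  have : ∀ v ∈ T, z v * ∑ e ∈ F.filter (fun e => v ∈ e), ∏ w ∈ e.erase v, z w
      = ∑ e ∈ F, (if v ∈ e then ∏ w ∈ e, z w else 0) := by
    intro v _
    rw [Finset.mul_sum, Finset.sum_filter]
    refine Finset.sum_congr rfl fun e _ => ?_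
    by_cases hv : v ∈ e
    · rw [if_pos hv, if_pos hv, Finset.mul_prod_erase e z hv]
    · simp [hv]
  rw [Finset.sum_congr rfl this, Finset.sum_comm]
  refine Finset.sum_congr rfl fun e _ => ?_
  rw [Finset.sum_ite_mem, Finset.sum_const, Finset.inter_comm, nsmul_eq_mul]

lemma eig_identity {E : Finset (Finset V)} {k : ℕ} (hU : Uniform E k) {lam : ℝ} {z : V → ℝ}
    (hz : isEig E k lam z) (hk0 : 0 < k) :
    (k : ℝ) * Phi E z = lam * Nk k z := by
  have h := sum_key E Finset.univ z
  have hL : ∑ v ∈ Finset.univ, z v * ∑ e ∈ E.filter (fun e => v ∈ e), ∏ w ∈ e.erase v, z w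
      = lam * Nk k z := by
    rw [Finset.sum_congr rfl (fun v _ => by rw [hz v])]
    unfold Nk
    rw [Finset.mul_sum]
    refine Finset.sum_congr rfl fun v _ => ?_
    rw [← mul_assoc, mul_comm (z v) lam, mul_assoc, ← pow_succ']
    congr 2
    omega
  rw [hL] at h
  rw [h]
  unfold Phi
  rw [Finset.mul_sum]
  exact (Finset.sum_congr rfl fun e he => by rw [Finset.inter_univ, hU e he]).symm

lemma Nk_pos {k : ℕ} (hk : Even k) (hk0 : 0 < k) {z : V → ℝ} (hz : z ≠ 0) : 0 < Nk k z := by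
  obtain ⟨v, hv⟩ : ∃ v, z v ≠ 0 := by
    by_contra h
    push_neg at h
    exact hz (funext h)
  refine Finset.sum_pos' (fun w _ => hk.pow_nonneg _) ⟨v, Finset.mem_univ v, ?_⟩
  exact hk.pow_pos hv

lemma Nk_zero {k : ℕ} (hk0 : 0 < k) : Nk (V := V) k 0 = 0 := by
  unfold Nk
  simp [zero_pow hk0.ne']

lemma Phi_zero {E : Finset (Finset V)} {k : ℕ} (hU : Uniform E k) (hk0 : 0 < k) :
    Phi E (0 : V → ℝ) = 0 := by
  unfold Phi
  refine Finset.sum_eq_zero fun e he => ?_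
  have : e.Nonempty := Finset.card_pos.mp (by rw [hU e he]; exact hk0)
  obtain ⟨v, hv⟩ := this
  exact Finset.prod_eq_zero hv rfl

lemma Phi_smul {E : Finset (Finset V)} {k : ℕ} (hU : Uniform E k) (c : ℝ) (z : V → ℝ) :
    Phi E (fun v => c * z v) = c ^ k * Phi E z := by
  unfold Phi
  rw [Finset.mul_sum]
  refine Finset.sum_congr rfl fun e he => ?_
  rw [Finset.prod_mul_distrib, Finset.prod_const, hU e he]

lemma Nk_smul (k : ℕ) (c : ℝ) (z : V → ℝ) :
    Nk k (fun v => c * z v) = c ^ k * Nk k z := by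
  unfold Nk
  rw [Finset.mul_sum]
  exact Finset.sum_congr rfl fun v _ => mul_pow c (z v) k

lemma variational [Nonempty V] (E : Finset (Finset V)) (k : ℕ)
    (hU : Uniform E k) (hk : Even k) (hk0 : 0 < k) (z : V → ℝ) :
    lamMin E k * Nk k z ≤ (k : ℝ) * Phi E z := by
  have hk2 : 2 ≤ k := by
    have := hk.two_dvd
    omega
  set S : Set (V → ℝ) := {z | Nk k z = 1} with hS
  -- S nonempty
  have hz₁ : Nk k (Pi.single (Classical.arbitrary V) (1 : ℝ)) = 1 := by
    unfold Nk
    rw [Finset.sum_eq_single (Classical.arbitrary V)]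
    · simp
    · intro w _ hw
      rw [Pi.single_eq_of_ne hw, zero_pow hk0.ne']
    · simp
  have hSne : S.Nonempty := ⟨_, hz₁⟩
  have hNcont : Continuous (Nk (V := V) k) := by
    unfold Nk
    exact continuous_finset_sum _ fun v _ => (continuous_apply v).pow k
  have hPcont : Continuous (Phi (V := V) E) := by
    unfold Phi
    exact continuous_finset_sum _ fun e _ =>
      continuous_finset_prod _ fun v _ => continuous_apply v
  have hSclosed : IsClosed S := isClosed_eq hNcont continuous_const
  have hSsub : S ⊆ Metric.closedBall 0 1 := by
    intro w hw
    rw [Metric.mem_closedBall, dist_pi_le_iff zero_le_one]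
    intro v
    rw [Real.dist_eq]
    simp only [Pi.zero_apply, sub_zero]
    rw [← pow_le_one_iff_of_nonneg (abs_nonneg _) hk0.ne']
    have h1 : w v ^ k ≤ 1 := by
      have h2 := Finset.single_le_sum (f := fun v => w v ^ k)
        (fun i _ => hk.pow_nonneg _) (Finset.mem_univ v)
      exact le_of_le_of_eq h2 hw
    calc |w v| ^ k = |w v ^ k| := (abs_pow _ _).symm
      _ = w v ^ k := abs_of_nonneg (hk.pow_nonneg _)
      _ ≤ 1 := h1
  have hScompact : IsCompact S :=
    Metric.isCompact_of_isClosed_isBounded hSclosed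
      (Metric.isBounded_closedBall.subset hSsub)
  obtain ⟨z₀, hz₀S, hmin⟩ := hScompact.exists_isMinOn hSne hPcont.continuousOn
  have hz₀1 : Nk k z₀ = 1 := hz₀S
  have hz₀ne : z₀ ≠ 0 := by
    intro h
    rw [h, Nk_zero hk0] at hz₀1
    norm_num at hz₀1
  -- Lagrange multipliers
  have hextr : IsLocalExtrOn (Phi E) {w | Nk k w = Nk k z₀} z₀ := by
    have : {w : V → ℝ | Nk k w = Nk k z₀} = S := by
      rw [hz₀1]
    rw [this]
    exact hmin.localize.isExtr
  obtain ⟨a, b, hab, hsum⟩ :=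
    hextr.exists_multipliers_of_hasStrictFDerivAt_1d (hasStrict_Nk k z₀) (hasStrict_Phi E z₀)
  have hcoord : ∀ v : V,
      a * ((k : ℝ) * z₀ v ^ (k - 1))
        + b * ∑ e ∈ E.filter (fun e => v ∈ e), ∏ w ∈ e.erase v, z₀ w = 0 := by
    intro v
    have h := ContinuousLinearMap.ext_iff.mp hsum (Pi.single v 1)
    rw [ContinuousLinearMap.add_apply, ContinuousLinearMap.smul_apply,
      ContinuousLinearMap.smul_apply, eval_deriv_Nk, eval_deriv_Phi] at h
    simpa using h
  have hb : b ≠ 0 := by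
    intro hb0
    have ha : a ≠ 0 := by
      intro ha0
      exact hab (by rw [ha0, hb0]; rfl)
    have : z₀ = 0 := by
      funext v
      have h := hcoord v
      rw [hb0, zero_mul, add_zero, mul_eq_zero] at h
      rcases h with h | h
      · exact absurd h ha
      · rw [mul_eq_zero] at h
        rcases h with h | h
        · exact absurd h (Nat.cast_ne_zero.mpr hk0.ne')
        · exact pow_eq_zero_iff (by omega : k - 1 ≠ 0) |>.mp h
    exact hz₀ne this
  set lam : ℝ := -(a * k / b) with hlam
  have heig : isEig E k lam z₀ := by
    intro v
    have h := hcoord v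
    rw [hlam]
    field_simp
    ring_nf
    ring_nf at h
    linarith [h]
  have hlamval : lam = (k : ℝ) * Phi E z₀ := by
    have := eig_identity hU heig hk0
    rw [hz₀1, mul_one] at this
    exact this.symm
  -- Rayleigh bound for all vectors
  have hray : ∀ w : V → ℝ, lam * Nk k w ≤ (k : ℝ) * Phi E w := by
    intro w
    by_cases hw : w = 0
    · rw [hw, Nk_zero hk0, Phi_zero hU hk0, mul_zero, mul_zero]
    · have ht : 0 < Nk k w := Nk_pos hk hk0 hw
      set c : ℝ := (Nk k w) ^ ((k : ℝ)⁻¹) with hc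
      have hcpos : 0 < c := Real.rpow_pos_of_pos ht _
      have hck : c ^ k = Nk k w := Real.rpow_inv_natCast_pow ht.le hk0.ne'
      have hw' : Nk k (fun v => c⁻¹ * w v) = 1 := by
        rw [Nk_smul, inv_pow, hck, inv_mul_cancel₀ ht.ne']
      have h1 : Phi E z₀ ≤ Phi E (fun v => c⁻¹ * w v) := hmin hw'
      rw [Phi_smul hU, inv_pow, hck] at h1
      have h2 : Phi E z₀ * Nk k w ≤ Phi E w := by
        calc Phi E z₀ * Nk k w ≤ ((Nk k w)⁻¹ * Phi E w) * Nk k w :=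
              mul_le_mul_of_nonneg_right h1 ht.le
          _ = Phi E w := by field_simp
      calc lam * Nk k w = (k : ℝ) * (Phi E z₀ * Nk k w) := by rw [hlamval]; ring
        _ ≤ (k : ℝ) * Phi E w := by
            apply mul_le_mul_of_nonneg_left h2 (Nat.cast_nonneg k)
  -- lam is the least H-eigenvalue
  have hleast : IsLeast (specH E k) lam := by
    constructor
    · exact ⟨z₀, hz₀ne, heig⟩
    · rintro ν ⟨w, hw0, hweig⟩
      have hid := eig_identity hU hweig hk0
      have hNw : 0 < Nk k w := Nk_pos hk hk0 hw0
      have := hray w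
      rw [hid] at this
      exact le_of_mul_le_mul_right this hNw
  have : lamMin E k = lam := hleast.csInf_eq
  rw [this]
  exact hray z

lemma pos_of_le_mul {c d : ℝ} (h : ∀ s : ℝ, 0 < s → d * s ≤ c) : 0 ≤ c := by
  rcases le_or_gt 0 d with hd | hd
  · have h1 := h 1 one_pos
    nlinarith
  · by_contra hc
    push_neg at hc
    have hs : 0 < c / (2 * d) := div_pos_of_neg_of_neg hc (by linarith)
    have h2 := h _ hs
    have h3 : d * (c / (2 * d)) = c / 2 := by
      have hd0 : d ≠ 0 := hd.ne
      field_simp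
    rw [h3] at h2
    linarith

end

/-- If `x` is a first eigenvector of `G = G₀(u) ⋄ H(u)`, then `α_H(x) = ∑_{e ∈ E_H(u)} ∏_{v ∈ e} x v ≤ 0`; if moreover `x u ≠ 0` and `x|_{G₀} ≠ 0` then `α_H(x) < 0`. -/
theorem stmt10 [Fintype V] [DecidableEq V]
    (V0 VH : Finset V) (u : V) (E0 EH : Finset (Finset V)) (k : ℕ)
    (hk : Even k) (hk0 : 0 < k)
    (hI : V0 ∩ VH = {u}) (hcover : V0 ∪ VH = Finset.univ)
    (hE0 : ∀ e ∈ E0, e ⊆ V0) (hEH : ∀ e ∈ EH, e ⊆ VH)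
    (hU : Uniform (E0 ∪ EH) k) (hconn : HConnected (E0 ∪ EH))
    (hE0ne : E0.Nonempty) (hEHne : EH.Nonempty)
    (x : V → ℝ) (hx : IsFirstEigvec (E0 ∪ EH) k x) :
    (∑ e ∈ EH.filter (fun e => u ∈ e), ∏ v ∈ e, x v) ≤ 0 ∧
    (x u ≠ 0 → (∃ v ∈ V0, x v ≠ 0) →
      (∑ e ∈ EH.filter (fun e => u ∈ e), ∏ v ∈ e, x v) < 0) := by
  classical
  obtain ⟨hxne, hxeig⟩ := hx
  have hNV : Nonempty V := ⟨u⟩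
  set E : Finset (Finset V) := E0 ∪ EH with hEdef
  set lam : ℝ := lamMin E k with hlamdef
  set α : ℝ := ∑ e ∈ EH.filter (fun e => u ∈ e), ∏ v ∈ e, x v with hαdef
  have hk2 : 2 ≤ k := by
    have := hk.two_dvd
    omega
  have huV0 : u ∈ V0 := by
    have h : u ∈ V0 ∩ VH := by rw [hI]; exact Finset.mem_singleton_self u
    exact (Finset.mem_inter.mp h).1
  have hVmem : ∀ v, v ∈ V0 → v ∈ VH → v = u := fun v h1 h2 =>
    Finset.mem_singleton.mp (hI ▸ Finset.mem_inter.mpr ⟨h1, h2⟩)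
  have hdisj : Disjoint E0 EH := by
    rw [Finset.disjoint_left]
    intro e he0 heH
    have hcard := hU e (Finset.mem_union_left _ he0)
    have hsub : e ⊆ {u} := fun v hv =>
      Finset.mem_singleton.mpr (hVmem v (hE0 e he0 hv) (hEH e heH hv))
    have := Finset.card_le_card hsub
    rw [Finset.card_singleton, hcard] at this
    omega
  set y : V → ℝ := fun v => if v ∈ V0 then x v else 0 with hydef
  have hyV0 : ∀ v ∈ V0, y v = x v := fun v hv => if_pos hv
  have hyVH : ∀ v, v ∈ VH → v ≠ u → y v = 0 := by
    intro v hv hvu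
    have : v ∉ V0 := fun h => hvu (hVmem v h hv)
    exact if_neg this
  have hNy : Nk k y = ∑ v ∈ V0, x v ^ k := by
    unfold Nk
    have h1 : ∀ v : V, y v ^ k = if v ∈ V0 then x v ^ k else 0 := by
      intro v
      by_cases h : v ∈ V0
      · rw [if_pos h, hyV0 v h]
      · rw [if_neg h]
        have hy0 : y v = 0 := if_neg h
        rw [hy0, zero_pow hk0.ne']
    rw [Finset.sum_congr rfl fun v _ => h1 v, Finset.sum_ite_mem, Finset.univ_inter]
  set S0 : ℝ := ∑ e ∈ E0, ∏ v ∈ e, x v with hS0def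
  have hEHzero : ∀ e ∈ EH, ∏ v ∈ e, y v = 0 := by
    intro e he
    obtain ⟨w, hwe, hwu⟩ : ∃ w ∈ e, w ≠ u := by
      apply Finset.exists_mem_ne
      rw [hU e (Finset.mem_union_right _ he)]
      omega
    exact Finset.prod_eq_zero hwe (hyVH w (hEH e he hwe) hwu)
  have hPhiy : Phi E y = S0 := by
    unfold Phi
    rw [Finset.sum_union hdisj]
    have h2 : ∑ e ∈ EH, ∏ v ∈ e, y v = 0 := Finset.sum_eq_zero hEHzero
    rw [h2, add_zero]
    exact Finset.sum_congr rfl fun e he =>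
      Finset.prod_congr rfl fun v hv => hyV0 v (hE0 e he hv)
  -- the key identity
  have hcardEH : ∀ e ∈ EH, ((e ∩ V0).card : ℝ) = if u ∈ e then 1 else 0 := by
    intro e he
    have hsub : e ∩ V0 ⊆ {u} := fun v hv => by
      obtain ⟨h1, h2⟩ := Finset.mem_inter.mp hv
      exact Finset.mem_singleton.mpr (hVmem v h2 (hEH e he h1))
    by_cases hu : u ∈ e
    · have : e ∩ V0 = {u} := by
        refine Finset.Subset.antisymm hsub fun v hv => ?_
        rw [Finset.mem_singleton] at hv
        subst hv
        exact Finset.mem_inter.mpr ⟨hu, huV0⟩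
      rw [this, if_pos hu, Finset.card_singleton, Nat.cast_one]
    · have : e ∩ V0 = ∅ := by
        rw [Finset.eq_empty_iff_forall_notMem]
        intro v hv
        have h3 := hsub hv
        rw [Finset.mem_singleton] at h3
        subst h3
        exact hu (Finset.mem_inter.mp hv).1
      rw [this, if_neg hu, Finset.card_empty, Nat.cast_zero]
  have hkey : lam * ∑ v ∈ V0, x v ^ k = k * S0 + α := by
    have h := sum_key E V0 x
    have hL : ∑ v ∈ V0, x v * ∑ e ∈ E.filter (fun e => v ∈ e), ∏ w ∈ e.erase v, x w
        = lam * ∑ v ∈ V0, x v ^ k := by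
      rw [Finset.mul_sum]
      refine Finset.sum_congr rfl fun v _ => ?_
      rw [hxeig v, ← mul_assoc, mul_comm (x v) lam, mul_assoc, ← pow_succ']
      congr 2
      omega
    rw [hL] at h
    rw [h, Finset.sum_union hdisj]
    have hE0part : ∑ e ∈ E0, ((e ∩ V0).card : ℝ) * ∏ v ∈ e, x v = k * S0 := by
      rw [hS0def, Finset.mul_sum]
      refine Finset.sum_congr rfl fun e he => ?_
      rw [Finset.inter_eq_left.mpr (hE0 e he), hU e (Finset.mem_union_left _ he)]
    have hEHpart : ∑ e ∈ EH, ((e ∩ V0).card : ℝ) * ∏ v ∈ e, x v = α := by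
      rw [hαdef, Finset.sum_filter]
      refine Finset.sum_congr rfl fun e he => ?_
      rw [hcardEH e he]
      by_cases hu : u ∈ e
      · rw [if_pos hu, if_pos hu, one_mul]
      · rw [if_neg hu, if_neg hu, zero_mul]
    rw [hE0part, hEHpart]
  have hvar := variational E k hU hk hk0
  have hα_le : α ≤ 0 := by
    have h1 := hvar y
    rw [hNy, hPhiy] at h1
    linarith
  refine ⟨hα_le, fun hxu _ => ?_⟩
  rcases hα_le.lt_or_eq with h | hα0
  · exact h
  exfalso
  -- E_H(u) is nonempty by connectivity
  have hEHu : (EH.filter (fun e => u ∈ e)).Nonempty := by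
    by_contra hem
    rw [Finset.not_nonempty_iff_eq_empty] at hem
    obtain ⟨e₀, he₀⟩ := hEHne
    obtain ⟨w, hwe, hwu⟩ : ∃ w ∈ e₀, w ≠ u := by
      apply Finset.exists_mem_ne
      rw [hU e₀ (Finset.mem_union_right _ he₀)]
      omega
    have hreach : ∀ b, Relation.ReflTransGen (HAdj E) u b → b ∈ V0 := by
      intro b hb
      induction hb with
      | refl => exact huV0
      | tail _ step ih =>
        obtain ⟨_, e, heE, hce, hbe⟩ := step
        rcases Finset.mem_union.mp heE with h0 | hH
        · exact hE0 e h0 hbe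
        · exfalso
          have hcu : _ = u := hVmem _ ih (hEH e hH hce)
          have : e ∈ EH.filter (fun e => u ∈ e) :=
            Finset.mem_filter.mpr ⟨hH, hcu ▸ hce⟩
          rw [hem] at this
          exact absurd this (Finset.notMem_empty e)
    have hwV0 : w ∈ V0 := hreach w (hconn u w)
    exact hwu (hVmem w hwV0 (hEH e₀ he₀ hwe))
  obtain ⟨estar, hestar⟩ := hEHu
  obtain ⟨hestarEH, huestar⟩ := Finset.mem_filter.mp hestar
  have hestarcard : estar.card = k := hU estar (Finset.mem_union_right _ hestarEH)
  -- perturbation family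
  have hEq : lam * Nk k y = k * Phi E y := by
    rw [hNy, hPhiy]
    rw [hαdef] at hα0
    linarith [hkey]
  set zf : ℝ → V → ℝ := fun s v => if v ∈ estar.erase u then s else y v with hzfdef
  have hzfy : ∀ s v, v ∉ estar.erase u → zf s v = y v := fun s v hv => if_neg hv
  have hzfs : ∀ s v, v ∈ estar.erase u → zf s v = s := fun s v hv => if_pos hv
  have hyerase : ∀ v ∈ estar.erase u, y v = 0 := by
    intro v hv
    obtain ⟨hvu, hve⟩ := Finset.mem_erase.mp hv
    exact hyVH v (hEH estar hestarEH hve) hvu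
  have hPhis : ∀ s : ℝ, Phi E (zf s) = S0 + x u * s ^ (k - 1) := by
    intro s
    unfold Phi
    rw [Finset.sum_union hdisj]
    have hE0part : ∑ e ∈ E0, ∏ v ∈ e, zf s v = S0 := by
      refine Finset.sum_congr rfl fun e he => Finset.prod_congr rfl fun v hv => ?_
      have hvV0 : v ∈ V0 := hE0 e he hv
      have hvnot : v ∉ estar.erase u := by
        intro hmem
        obtain ⟨hvu, hve⟩ := Finset.mem_erase.mp hmem
        exact hvu (hVmem v hvV0 (hEH estar hestarEH hve))
      rw [hzfy s v hvnot, hyV0 v hvV0]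
    have hEHpart : ∑ e ∈ EH, ∏ v ∈ e, zf s v = x u * s ^ (k - 1) := by
      rw [Finset.sum_eq_single estar]
      · rw [← Finset.mul_prod_erase estar _ huestar]
        have h1 : zf s u = x u := by
          rw [hzfy s u (Finset.notMem_erase u estar), hyV0 u huV0]
        have h2 : ∏ v ∈ estar.erase u, zf s v = s ^ (k - 1) := by
          rw [Finset.prod_congr rfl fun v hv => hzfs s v hv, Finset.prod_const,
            Finset.card_erase_of_mem huestar, hestarcard]
        rw [h1, h2]
      · intro e heEH hne
        obtain ⟨v, hve, hvnotstar⟩ : ∃ v ∈ e, v ∉ estar := by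
          by_contra hcon
          push_neg at hcon
          exact hne (Finset.eq_of_subset_of_card_le hcon
            (by rw [hestarcard, hU e (Finset.mem_union_right _ heEH)]))
        refine Finset.prod_eq_zero hve ?_
        have hvnot : v ∉ estar.erase u := fun h => hvnotstar (Finset.mem_of_mem_erase h)
        rw [hzfy s v hvnot]
        have hvu : v ≠ u := fun h => hvnotstar (h ▸ huestar)
        exact hyVH v (hEH e heEH hve) hvu
      · intro h
        exact absurd hestarEH h
    rw [hE0part, hEHpart]
  have hNs : ∀ s : ℝ, Nk k (zf s) = Nk k y + ((k : ℝ) - 1) * s ^ k := by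
    intro s
    unfold Nk
    rw [← Finset.sum_add_sum_compl (estar.erase u)]
    have h1 : ∑ v ∈ estar.erase u, zf s v ^ k = ((k : ℝ) - 1) * s ^ k := by
      rw [Finset.sum_congr rfl fun v hv => by rw [hzfs s v hv], Finset.sum_const,
        Finset.card_erase_of_mem huestar, hestarcard, nsmul_eq_mul]
      congr 1
      have : (1 : ℕ) ≤ k := hk0
      push_cast [Nat.cast_sub this]
      ring
    have h2 : ∑ v ∈ (estar.erase u)ᶜ, zf s v ^ k = ∑ v : V, y v ^ k := by
      rw [← Finset.sum_add_sum_compl (estar.erase u) (fun v => y v ^ k)]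
      have h3 : ∑ v ∈ estar.erase u, y v ^ k = 0 :=
        Finset.sum_eq_zero fun v hv => by rw [hyerase v hv, zero_pow hk0.ne']
      rw [h3, zero_add]
      exact Finset.sum_congr rfl fun v hv => by
        rw [hzfy s v (by simpa using Finset.mem_compl.mp hv)]
    rw [h1, h2]
    ring
  have hineq : ∀ s : ℝ, lam * ((k : ℝ) - 1) * s ^ k ≤ k * (x u * s ^ (k - 1)) := by
    intro s
    have h1 := hvar (zf s)
    rw [hPhis s, hNs s] at h1
    nlinarith [hEq]
  -- derive x u = 0
  have hodd : Odd (k - 1) := Nat.Even.sub_odd hk0 hk odd_one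
  have hpow : ∀ s : ℝ, s ^ k = s * s ^ (k - 1) := by
    intro s
    rw [← pow_succ']
    congr 1
    omega
  have hub : ∀ s : ℝ, 0 < s → lam * ((k : ℝ) - 1) * s ≤ k * x u := by
    intro s hs
    have h1 := hineq s
    rw [hpow s] at h1
    have hp : (0 : ℝ) < s ^ (k - 1) := pow_pos hs _
    have h2 : (lam * ((k : ℝ) - 1) * s) * s ^ (k - 1) ≤ (k * x u) * s ^ (k - 1) := by
      calc (lam * ((k : ℝ) - 1) * s) * s ^ (k - 1)
          = lam * ((k : ℝ) - 1) * (s * s ^ (k - 1)) := by ring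
        _ ≤ k * (x u * s ^ (k - 1)) := h1
        _ = (k * x u) * s ^ (k - 1) := by ring
    exact le_of_mul_le_mul_right h2 hp
  have hub' : ∀ s : ℝ, 0 < s → lam * ((k : ℝ) - 1) * s ≤ k * (-(x u)) := by
    intro s hs
    have h1 := hineq (-s)
    rw [hk.neg_pow, hodd.neg_pow, hpow s] at h1
    have hp : (0 : ℝ) < s ^ (k - 1) := pow_pos hs _
    have h2 : (lam * ((k : ℝ) - 1) * s) * s ^ (k - 1) ≤ (k * (-(x u))) * s ^ (k - 1) := by
      calc (lam * ((k : ℝ) - 1) * s) * s ^ (k - 1)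
          = lam * ((k : ℝ) - 1) * (s * s ^ (k - 1)) := by ring
        _ ≤ k * (x u * -s ^ (k - 1)) := h1
        _ = (k * (-(x u))) * s ^ (k - 1) := by ring
    exact le_of_mul_le_mul_right h2 hp
  have h1 : (0 : ℝ) ≤ k * x u := pos_of_le_mul fun s hs => hub s hs
  have h2 : (0 : ℝ) ≤ k * (-(x u)) := pos_of_le_mul fun s hs => hub' s hs
  have hkpos : (0 : ℝ) < k := by exact_mod_cast hk0
  have : x u = 0 := by nlinarith
  exact hxu this
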